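/- Let U be an ℓ×ℓ complex unitary matrix with ℓ distinct eigenvalues λ_1, …, λ_ℓ and a corresponding orthonormal basis of eigenvectors z_1, …, z_ℓ (so U z_r = λ_r z_r). Let x = Σ_{r=1}^ℓ a_r z_r with Σ_r |a_r|² = 1, and let D_S be the diagonal 0–1 characteristic matrix of a subset S of coordinates. Then the time averages (1/K) Σ_{k=0}^{K-1} x* (U^k)* D_S U^k x converge, as K → ∞, to Σ_{r=1}^ℓ |a_r|² (z_r* D_S z_r). -/

import Mathlib

open Matrix Filter Finset

/-- The diagonal 0–1 characteristic matrix of a subset `S` of coordinates. -/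
noncomputable def charMatrix {ℓ : ℕ} (S : Finset (Fin ℓ)) : Matrix (Fin ℓ) (Fin ℓ) ℂ :=
  Matrix.diagonal fun i => if i ∈ S then 1 else 0

private lemma sum_dotProduct' {n m : ℕ} (f : Fin n → Fin m → ℂ) (w : Fin m → ℂ) :
    (∑ r, f r) ⬝ᵥ w = ∑ r, f r ⬝ᵥ w := by
  simp only [dotProduct, Finset.sum_apply, Finset.sum_mul]
  exact Finset.sum_comm

private lemma dotProduct_sum' {n m : ℕ} (w : Fin m → ℂ) (f : Fin n → Fin m → ℂ) :
    w ⬝ᵥ (∑ r, f r) = ∑ r, w ⬝ᵥ f r := by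
  simp only [dotProduct, Finset.sum_apply, Finset.mul_sum]
  exact Finset.sum_comm

private lemma mulVec_sum' {n m : ℕ} (M : Matrix (Fin m) (Fin m) ℂ) (f : Fin n → Fin m → ℂ) :
    M *ᵥ (∑ r, f r) = ∑ r, M *ᵥ f r := by
  funext i
  simp only [Matrix.mulVec, dotProduct, Finset.sum_apply, Finset.mul_sum]
  exact Finset.sum_comm

private lemma cesaro_pow (μ : ℂ) (hμ : ‖μ‖ = 1) :
    Tendsto (fun K : ℕ => (K : ℂ)⁻¹ * ∑ k ∈ Finset.range K, μ ^ k) atTop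
      (nhds (if μ = 1 then 1 else 0)) := by
  by_cases h : μ = 1
  · subst h
    simp only [one_pow, sum_const, card_range, nsmul_eq_mul, mul_one, if_pos rfl]
    have hev : ∀ᶠ K : ℕ in atTop, (K : ℂ)⁻¹ * K = 1 := by
      filter_upwards [eventually_gt_atTop 0] with K hK
      have : (K : ℂ) ≠ 0 := Nat.cast_ne_zero.mpr hK.ne'
      field_simp
    exact Tendsto.congr' (hev.mono fun K h => h.symm) tendsto_const_nhds
  · simp only [if_neg h]
    have hμ1 : ‖μ - 1‖ ≠ 0 := by
      simpa [sub_eq_zero] using h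
    apply squeeze_zero_norm (a := fun K : ℕ => (K : ℝ)⁻¹ * (2 / ‖μ - 1‖))
    · intro K
      rw [geom_sum_eq h K, norm_mul]
      have h1 : ‖(K : ℂ)⁻¹‖ = (K : ℝ)⁻¹ := by
        simp [norm_inv]
      rw [h1]
      have hnum : ‖μ ^ K - 1‖ ≤ 2 := by
        have h3 := norm_sub_le (μ ^ K) (1 : ℂ)
        simp only [norm_pow, hμ, one_pow, norm_one] at h3
        linarith
      have hden : 0 < ‖μ - 1‖ :=
        lt_of_le_of_ne (norm_nonneg _) (Ne.symm hμ1)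
      have h2 : ‖(μ ^ K - 1) / (μ - 1)‖ ≤ 2 / ‖μ - 1‖ := by
        rw [norm_div]
        gcongr
      exact mul_le_mul_of_nonneg_left h2 (by positivity)
    · have := (tendsto_inv_atTop_nhds_zero_nat (𝕜 := ℝ)).mul_const (2 / ‖μ - 1‖)
      simpa using this

/-- If `U` is unitary with ℓ distinct eigenvalues and an orthonormal
eigenbasis `z_1, …, z_ℓ`, and `x = ∑ r, a_r z_r` with `∑ r, |a_r|² = 1`, then the
time averages `(1/K) ∑_{k<K} x* (U^k)* D_S U^k x` converge to
`∑ r, |a_r|² (z_r* D_S z_r)`. -/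
theorem avg_prob_simple_eigenvalues (ℓ : ℕ)
    (U : Matrix (Fin ℓ) (Fin ℓ) ℂ)
    (hU : U ∈ Matrix.unitaryGroup (Fin ℓ) ℂ)
    (lam : Fin ℓ → ℂ) (hdist : Function.Injective lam)
    (z : Fin ℓ → Fin ℓ → ℂ)
    (hortho : ∀ r s, star (z r) ⬝ᵥ z s = if r = s then 1 else 0)
    (heig : ∀ r, U *ᵥ z r = lam r • z r)
    (a : Fin ℓ → ℂ) (x : Fin ℓ → ℂ)
    (hx : x = ∑ r, a r • z r)
    (ha : ∑ r, ‖a r‖ ^ 2 = 1)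
    (S : Finset (Fin ℓ)) :
    Filter.Tendsto
      (fun K : ℕ => (K : ℂ)⁻¹ *
        ∑ k ∈ Finset.range K,
          star x ⬝ᵥ (((U ^ k)ᴴ * charMatrix S * U ^ k) *ᵥ x))
      Filter.atTop
      (nhds (∑ r, (‖a r‖ : ℂ) ^ 2 * (star (z r) ⬝ᵥ (charMatrix S *ᵥ z r)))) := by
  set D := charMatrix S with hD
  -- eigenvalues of powers
  have hpow : ∀ (k : ℕ) (r : Fin ℓ), (U ^ k) *ᵥ z r = lam r ^ k • z r := by
    intro k r
    induction k with
    | zero => simp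
    | succ k ih =>
        rw [pow_succ', ← Matrix.mulVec_mulVec, ih, Matrix.mulVec_smul, heig r,
          smul_smul, ← pow_succ]
  -- eigenvalues have modulus one
  have hUdag : Uᴴ * U = 1 := hU.1
  have habs : ∀ r, starRingEnd ℂ (lam r) * lam r = 1 := by
    intro r
    have h1 : star (U *ᵥ z r) ⬝ᵥ (U *ᵥ z r) = star (z r) ⬝ᵥ z r := by
      rw [Matrix.star_mulVec, ← Matrix.dotProduct_mulVec, Matrix.mulVec_mulVec, hUdag]
      simp
    rw [heig r] at h1
    have h2 : star (lam r • z r) ⬝ᵥ (lam r • z r)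
        = starRingEnd ℂ (lam r) * lam r * (star (z r) ⬝ᵥ z r) := by
      rw [star_smul, smul_dotProduct, dotProduct_smul]
      simp [smul_smul, mul_comm]
      ring
    rw [h2, hortho r r, if_pos rfl, mul_one] at h1
    simpa using h1
  -- key expansion of the quadratic form
  have hterm : ∀ k : ℕ,
      star x ⬝ᵥ (((U ^ k)ᴴ * D * U ^ k) *ᵥ x)
        = ∑ r, ∑ s, (starRingEnd ℂ (a r) * a s * (star (z r) ⬝ᵥ (D *ᵥ z s)))
            * (starRingEnd ℂ (lam r) * lam s) ^ k := by
    intro k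
    have hx' : (U ^ k) *ᵥ x = ∑ r, (a r * lam r ^ k) • z r := by
      rw [hx, mulVec_sum']
      refine Finset.sum_congr rfl fun r _ => ?_
      rw [Matrix.mulVec_smul, hpow, smul_smul]
    have hlhs : star x ⬝ᵥ (((U ^ k)ᴴ * D * U ^ k) *ᵥ x)
        = star ((U ^ k) *ᵥ x) ⬝ᵥ (D *ᵥ ((U ^ k) *ᵥ x)) := by
      rw [← Matrix.mulVec_mulVec, ← Matrix.mulVec_mulVec, Matrix.dotProduct_mulVec,
        ← Matrix.star_mulVec]
    rw [hlhs, hx', mulVec_sum']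
    rw [show star (∑ r, (a r * lam r ^ k) • z r)
        = ∑ r, (starRingEnd ℂ (a r * lam r ^ k)) • star (z r) by
      simp [star_smul]]
    rw [sum_dotProduct']
    refine Finset.sum_congr rfl fun r _ => ?_
    rw [dotProduct_sum']
    refine Finset.sum_congr rfl fun s _ => ?_
    rw [smul_dotProduct, Matrix.mulVec_smul, dotProduct_smul]
    simp only [smul_eq_mul, _root_.map_mul, _root_.map_pow, mul_pow]
    ring
  -- rewrite the averaged sum
  have hfun : ∀ K : ℕ,
      (K : ℂ)⁻¹ * ∑ k ∈ Finset.range K, star x ⬝ᵥ (((U ^ k)ᴴ * D * U ^ k) *ᵥ x)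
        = ∑ r, ∑ s, (starRingEnd ℂ (a r) * a s * (star (z r) ⬝ᵥ (D *ᵥ z s)))
            * ((K : ℂ)⁻¹ * ∑ k ∈ Finset.range K, (starRingEnd ℂ (lam r) * lam s) ^ k) := by
    intro K
    simp only [hterm, Finset.mul_sum]
    rw [Finset.sum_comm]
    refine Finset.sum_congr rfl fun r _ => ?_
    rw [Finset.sum_comm]
    refine Finset.sum_congr rfl fun s _ => ?_
    refine Finset.sum_congr rfl fun k _ => ?_
    ring
  -- the condition μ = 1 iff r = s
  have hmu : ∀ r s, (starRingEnd ℂ (lam r) * lam s = 1) ↔ r = s := by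
    intro r s
    constructor
    · intro h
      have h2 : starRingEnd ℂ (lam r) * lam s = starRingEnd ℂ (lam r) * lam r := by
        rw [h, habs r]
      have hne : starRingEnd ℂ (lam r) ≠ 0 := by
        intro h0
        rw [h0, zero_mul] at h
        exact one_ne_zero h.symm
      exact (hdist (mul_left_cancel₀ hne h2)).symm
    · intro h; subst h; exact habs r
  -- modulus one products
  have habs1 : ∀ r s, ‖starRingEnd ℂ (lam r) * lam s‖ = 1 := by
    intro r s
    have hr : ‖lam r‖ = 1 := by
      have := habs r
      have h1 : ‖lam r‖ ^ 2 = 1 := by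
        have := congrArg norm (habs r)
        simpa [norm_mul, sq, Complex.norm_conj] using this
      nlinarith [norm_nonneg (lam r)]
    have hs : ‖lam s‖ = 1 := by
      have h1 : ‖lam s‖ ^ 2 = 1 := by
        have := congrArg norm (habs s)
        simpa [norm_mul, sq, Complex.norm_conj] using this
      nlinarith [norm_nonneg (lam s)]
    simp [norm_mul, Complex.norm_conj, hr, hs]
  -- convergence of each term
  have hconv : Tendsto
      (fun K : ℕ => ∑ r, ∑ s, (starRingEnd ℂ (a r) * a s * (star (z r) ⬝ᵥ (D *ᵥ z s)))
          * ((K : ℂ)⁻¹ * ∑ k ∈ Finset.range K, (starRingEnd ℂ (lam r) * lam s) ^ k))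
      atTop
      (nhds (∑ r, ∑ s, (starRingEnd ℂ (a r) * a s * (star (z r) ⬝ᵥ (D *ᵥ z s)))
          * (if starRingEnd ℂ (lam r) * lam s = 1 then 1 else 0))) := by
    refine tendsto_finset_sum _ fun r _ => tendsto_finset_sum _ fun s _ => ?_
    exact (cesaro_pow _ (habs1 r s)).const_mul _
  have hlim : (∑ r, ∑ s, (starRingEnd ℂ (a r) * a s * (star (z r) ⬝ᵥ (D *ᵥ z s)))
          * (if starRingEnd ℂ (lam r) * lam s = 1 then 1 else 0))
      = ∑ r, (‖a r‖ : ℂ) ^ 2 * (star (z r) ⬝ᵥ (D *ᵥ z r)) := by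
    refine Finset.sum_congr rfl fun r _ => ?_
    rw [Finset.sum_eq_single r]
    · rw [if_pos ((hmu r r).mpr rfl), mul_one]
      have : (‖a r‖ : ℂ) ^ 2 = starRingEnd ℂ (a r) * a r := by
        rw [← Complex.normSq_eq_conj_mul_self, ← Complex.sq_norm]
        push_cast
        ring
      rw [this]
    · intro s _ hs
      rw [if_neg (fun h => hs ((hmu r s).mp h).symm), mul_zero]
    · intro h; exact absurd (Finset.mem_univ r) h
  rw [← hlim]
  exact hconv.congr fun K => (hfun K).symm
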